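/- arXiv:2512.07227 — 4 statements merged into one kernel-verified Lean document; each statement's English description precedes it below -/
import Mathlib

section
/- Let F be a free ultrafilter on ℕ and V = {x ∈ l_p(ℕ) : {n : x n = 0} ∈ F}. Then V has infinite codimension in l_p(ℕ); more precisely, the sequences x^α = (2^{n α}) for α < 0 are linearly independent modulo V (no nontrivial finite linear combination lies in V), so the codimension is at least the cardinality of the continuum. -/
open Filter

/-- key analytic lemma: a nontrivial combination of distinct negative exponentials
vanishes only finitely often. -/
lemma zero_set_finite (k : ℕ) (α : Fin k → ℝ) (hinj : Function.Injective α)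
    (c : Fin k → ℝ) (hc : c ≠ 0) :
    {n : ℕ | ∑ j, c j * (2 : ℝ) ^ ((n : ℝ) * α j) = 0}.Finite := by
  classical
  -- choose j0 with c j0 ≠ 0 maximizing α
  have hs : (Finset.univ.filter fun j => c j ≠ 0).Nonempty := by
    obtain ⟨j, hj⟩ := Function.ne_iff.mp hc
    exact ⟨j, by simpa using hj⟩
  obtain ⟨j0, hj0mem, hj0max⟩ :=
    (Finset.univ.filter fun j => c j ≠ 0).exists_max_image α hs
  have hcj0 : c j0 ≠ 0 := (Finset.mem_filter.mp hj0mem).2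
  -- the renormalized sum tends to c j0
  have htend : Tendsto (fun n : ℕ => ∑ j, c j * (2 : ℝ) ^ ((n : ℝ) * (α j - α j0)))
      atTop (nhds (c j0)) := by
    have : (c j0) = ∑ j, if j = j0 then c j0 else 0 := by simp
    rw [this]
    refine tendsto_finset_sum _ (fun j _ => ?_)
    by_cases hj : j = j0
    · subst hj
      simpa using tendsto_const_nhds (x := c j) (f := atTop (α := ℕ))
    · simp only [if_neg hj]
      by_cases hcj : c j = 0
      · simpa [hcj] using tendsto_const_nhds (x := (0:ℝ)) (f := atTop (α := ℕ))
      · have hlt : α j - α j0 < 0 := by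
          have hle : α j ≤ α j0 := hj0max j (by simp [hcj])
          have hne : α j ≠ α j0 := fun h => hj (hinj h)
          linarith [lt_of_le_of_ne hle hne]
        have hr1 : (2 : ℝ) ^ (α j - α j0) < 1 :=
          Real.rpow_lt_one_of_one_lt_of_neg one_lt_two hlt
        have hr0 : (0 : ℝ) ≤ (2 : ℝ) ^ (α j - α j0) := (Real.rpow_pos_of_pos two_pos _).le
        have h0 : Tendsto (fun n : ℕ => ((2:ℝ) ^ (α j - α j0)) ^ n) atTop (nhds 0) :=
          tendsto_pow_atTop_nhds_zero_of_lt_one hr0 hr1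
        have heq : ∀ n : ℕ, ((2:ℝ) ^ (α j - α j0)) ^ n = (2:ℝ) ^ ((n:ℝ) * (α j - α j0)) := by
          intro n
          rw [← Real.rpow_natCast ((2:ℝ) ^ (α j - α j0)) n, ← Real.rpow_mul (by norm_num),
            mul_comm]
        have := h0.const_mul (c j)
        simp only [mul_zero] at this
        simpa [heq] using this
  have hev : ∀ᶠ n : ℕ in atTop,
      (∑ j, c j * (2 : ℝ) ^ ((n : ℝ) * (α j - α j0))) ≠ 0 :=
    htend.eventually_ne hcj0
  rw [eventually_atTop] at hev
  obtain ⟨N, hN⟩ := hev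
  refine Set.Finite.subset (Set.finite_Iio N) ?_
  intro n hn
  simp only [Set.mem_setOf_eq] at hn
  by_contra hnN
  simp only [Set.mem_Iio, not_lt] at hnN
  refine hN n hnN ?_
  have hfac : ∀ j, c j * (2 : ℝ) ^ ((n : ℝ) * α j) =
      (2 : ℝ) ^ ((n : ℝ) * α j0) * (c j * (2 : ℝ) ^ ((n : ℝ) * (α j - α j0))) := by
    intro j
    rw [show (n:ℝ) * α j = (n:ℝ) * α j0 + (n:ℝ) * (α j - α j0) by ring,
      Real.rpow_add two_pos]
    ring
  have : (2 : ℝ) ^ ((n : ℝ) * α j0) *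
      (∑ j, c j * (2 : ℝ) ^ ((n : ℝ) * (α j - α j0))) = 0 := by
    rw [Finset.mul_sum]
    rw [← hn]
    exact (Finset.sum_congr rfl fun j _ => (hfac j).symm)
  exact (mul_eq_zero.mp this).resolve_left
    (Real.rpow_pos_of_pos two_pos _).ne'

lemma mem_lp_exp (p : ENNReal) [Fact (1 ≤ p)] (α : ℝ) (hα : α < 0) :
    Memℓp (fun n : ℕ => (2 : ℝ) ^ ((n : ℝ) * α)) p := by
  have hr1 : (2 : ℝ) ^ α < 1 := Real.rpow_lt_one_of_one_lt_of_neg one_lt_two hα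
  have hr0 : (0 : ℝ) ≤ (2 : ℝ) ^ α := (Real.rpow_pos_of_pos two_pos _).le
  have heq : ∀ n : ℕ, (2 : ℝ) ^ ((n : ℝ) * α) = ((2:ℝ) ^ α) ^ n := by
    intro n
    rw [← Real.rpow_natCast ((2:ℝ) ^ α) n, ← Real.rpow_mul (by norm_num), mul_comm]
  have h1 : Memℓp (fun n : ℕ => (2 : ℝ) ^ ((n : ℝ) * α)) 1 := by
    apply memℓp_gen
    simp only [ENNReal.toReal_one, Real.rpow_one]
    have : Summable (fun n : ℕ => ((2:ℝ) ^ α) ^ n) :=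
      summable_geometric_of_lt_one hr0 hr1
    apply this.congr
    intro n
    rw [heq n, Real.norm_eq_abs, abs_of_nonneg (pow_nonneg hr0 n)]
  exact h1.of_exponent_ge (Fact.out : 1 ≤ p)

def Wsub (p : ENNReal) [Fact (1 ≤ p)] (F : Ultrafilter ℕ) :
    Submodule ℝ (lp (fun _ : ℕ => ℝ) p) where
  carrier := {x : lp (fun _ : ℕ => ℝ) p | {n : ℕ | (x : ℕ → ℝ) n = 0} ∈ F}
  add_mem' := by
    intro a b ha hb
    refine Filter.mem_of_superset (Filter.inter_mem ha hb) ?_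
    intro n hn
    simp only [Set.mem_inter_iff, Set.mem_setOf_eq] at hn ⊢
    rw [lp.coeFn_add, Pi.add_apply, hn.1, hn.2, add_zero]
  zero_mem' := by
    simp only [Set.mem_setOf_eq, lp.coeFn_zero, Pi.zero_apply, Set.setOf_true]
    exact Filter.univ_mem
  smul_mem' := by
    intro r a ha
    refine Filter.mem_of_superset ha ?_
    intro n hn
    simp only [Set.mem_setOf_eq] at hn ⊢
    rw [lp.coeFn_smul, Pi.smul_apply, hn, smul_zero]

theorem stmt_5 (p : ENNReal) [Fact (1 ≤ p)] (F : Ultrafilter ℕ)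
    (hF : ∀ s : Set ℕ, s.Finite → s ∉ F) :
    (∀ (k : ℕ) (α : Fin k → ℝ), Function.Injective α → (∀ j, α j < 0) →
      ∀ c : Fin k → ℝ, c ≠ 0 →
        ∀ x : lp (fun _ : ℕ => ℝ) p,
          (x : ℕ → ℝ) = (fun n : ℕ => ∑ j, c j * (2 : ℝ) ^ ((n : ℝ) * α j)) →
          {n : ℕ | (x : ℕ → ℝ) n = 0} ∉ F) ∧
    ∃ W : Submodule ℝ (lp (fun _ : ℕ => ℝ) p),
      (W : Set (lp (fun _ : ℕ => ℝ) p)) =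
        {x : lp (fun _ : ℕ => ℝ) p | {n : ℕ | (x : ℕ → ℝ) n = 0} ∈ F} ∧
      Cardinal.continuum ≤ Module.rank ℝ (lp (fun _ : ℕ => ℝ) p ⧸ W) := by
  classical
  constructor
  · intro k α hinj hneg c hc x hx hmem
    refine hF _ ?_ hmem
    rw [hx]
    exact zero_set_finite k α hinj c hc
  · refine ⟨Wsub p F, rfl, ?_⟩
    set W := Wsub p F with hW
    -- the family
    set e : Set.Iio (0:ℝ) → lp (fun _ : ℕ => ℝ) p :=
      fun α => ⟨fun n : ℕ => (2 : ℝ) ^ ((n : ℝ) * (α : ℝ)), mem_lp_exp p α α.2⟩ with he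
    have hli : LinearIndependent ℝ (fun α => W.mkQ (e α)) := by
      rw [linearIndependent_iff']
      intro s g hg i hi
      simp_rw [← map_smul, ← map_sum] at hg
      have hmem : (∑ j ∈ s, g j • e j) ∈ W := by
        rwa [Submodule.mkQ_apply, Submodule.Quotient.mk_eq_zero] at hg
      by_contra hgi
      -- set up the finite combination
      have hfin : {n : ℕ | ((∑ j ∈ s, g j • e j : lp (fun _ : ℕ => ℝ) p) : ℕ → ℝ) n
          = 0}.Finite := by
        have hcoe : ((∑ j ∈ s, g j • e j : lp (fun _ : ℕ => ℝ) p) : ℕ → ℝ) =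
            fun n : ℕ => ∑ j ∈ s, g j * (2 : ℝ) ^ ((n : ℝ) * (j : ℝ)) := by
          funext n
          rw [lp.coeFn_sum]
          simp only [Finset.sum_apply, lp.coeFn_smul, Pi.smul_apply, smul_eq_mul]
          rfl
        rw [hcoe]
        -- reindex by Fin s.card
        obtain ⟨eq⟩ : Nonempty ((Fin s.card) ≃ {x // x ∈ s}) :=
          ⟨(s.equivFin).symm⟩
        have := zero_set_finite s.card (fun m => ((eq m : Set.Iio (0:ℝ)) : ℝ))
          (by
            intro a b hab
            apply eq.injective
            exact Subtype.ext (Subtype.ext hab))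
          (fun m => g (eq m))
          (by
            intro h0
            apply hgi
            have := congrFun h0 (eq.symm ⟨i, hi⟩)
            simpa using this)
        refine this.subset ?_
        intro n hn
        simp only [Set.mem_setOf_eq] at hn ⊢
        calc ∑ m : Fin s.card, g (eq m) * (2:ℝ) ^ ((n:ℝ) * ((eq m : Set.Iio (0:ℝ)) : ℝ))
            = ∑ j : {x // x ∈ s}, g (j : Set.Iio (0:ℝ)) *
                (2:ℝ) ^ ((n:ℝ) * ((j : Set.Iio (0:ℝ)) : ℝ)) :=
              Equiv.sum_comp eq (fun j : {x // x ∈ s} => g (j : Set.Iio (0:ℝ)) * (2:ℝ) ^ ((n:ℝ) * ((j : Set.Iio (0:ℝ)) : ℝ)))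
          _ = ∑ j ∈ s, g j * (2:ℝ) ^ ((n:ℝ) * (j : ℝ)) := Finset.sum_coe_sort s (fun j => g j * (2:ℝ) ^ ((n:ℝ) * (j : ℝ)))
          _ = 0 := hn
      exact hF _ hfin hmem
    calc Cardinal.continuum = Cardinal.mk (Set.Iio (0:ℝ)) :=
            (Cardinal.mk_Iio_real 0).symm
      _ ≤ Module.rank ℝ (lp (fun _ : ℕ => ℝ) p ⧸ W) := hli.cardinal_le_rank
end

section
/- For 1 ≤ p ≤ ∞ there exists an unbounded (discontinuous) linear functional h on l_p(ℕ) such that for every family (a_i)_{i∈I} of elements with pairwise disjoint supports, at most one a_i lies outside ker h. -/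
open Filter Set
open scoped ENNReal

noncomputable section Stmt8Aux

namespace Stmt8

/-- The subspace of sequences vanishing on a set of the hyperfilter. -/
def V (p : ENNReal) [Fact (1 ≤ p)] : Submodule ℝ (lp (fun _ : ℕ => ℝ) p) where
  carrier := {x | {n | (x : ℕ → ℝ) n = 0} ∈ hyperfilter ℕ}
  zero_mem' := by
    have : {n : ℕ | ((0 : lp (fun _ : ℕ => ℝ) p) : ℕ → ℝ) n = 0} = Set.univ := by
      ext n; simp [lp.coeFn_zero]
    simp only [Set.mem_setOf_eq, this]
    exact univ_mem
  add_mem' := by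
    intro x y hx hy
    refine mem_of_superset (inter_mem hx hy) ?_
    intro n hn
    simp only [Set.mem_inter_iff, Set.mem_setOf_eq] at hn ⊢
    have := lp.coeFn_add x y
    rw [show ((x + y : lp (fun _ : ℕ => ℝ) p) : ℕ → ℝ) n = (x : ℕ → ℝ) n + (y : ℕ → ℝ) n from
      congrFun (lp.coeFn_add x y) n]
    rw [hn.1, hn.2, add_zero]
  smul_mem' := by
    intro c x hx
    refine mem_of_superset hx ?_
    intro n hn
    simp only [Set.mem_setOf_eq] at hn ⊢
    rw [show ((c • x : lp (fun _ : ℕ => ℝ) p) : ℕ → ℝ) n = c • (x : ℕ → ℝ) n from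
      congrFun (lp.coeFn_smul c x) n]
    rw [hn, smul_zero]

/-- The basic sequence. -/
def xf (k : ℕ) : ℕ → ℝ := fun n => (1 / ((n : ℝ) + 1)) ^ (k + 2)

lemma xf_pos (k n : ℕ) : 0 < xf k n := by
  apply pow_pos; positivity

lemma xf_le_one (k n : ℕ) : xf k n ≤ 1 := by
  apply pow_le_one₀ (by positivity)
  rw [div_le_one (by positivity)]; linarith [Nat.cast_nonneg (α := ℝ) n]

lemma base_pos (n : ℕ) : (0:ℝ) < 1 / ((n : ℝ) + 1) := by positivity
lemma base_le_one (n : ℕ) : 1 / ((n : ℝ) + 1) ≤ 1 := by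
  rw [div_le_one (by positivity)]; linarith [Nat.cast_nonneg (α := ℝ) n]

lemma sum_range_le : ∀ N : ℕ, ∑ n ∈ Finset.range (N+1), (1 / ((n : ℝ) + 1)) ^ 2 ≤ 2 - 1 / ((N:ℝ)+1) := by
  intro N
  induction N with
  | zero => norm_num
  | succ m ih =>
    rw [Finset.sum_range_succ]
    have h1 : (1 / ((m : ℝ) + 1 + 1)) ^ 2 ≤ 1 / ((m:ℝ)+1) - 1 / ((m:ℝ)+1+1) := by
      rw [div_sub_div _ _ (by positivity) (by positivity)]
      rw [div_pow, div_le_div_iff₀ (by positivity) (by positivity)]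
      nlinarith [Nat.cast_nonneg (α := ℝ) m]
    push_cast
    push_cast at ih
    linarith

lemma sum_sq_le (s : Finset ℕ) : ∑ n ∈ s, (1 / ((n : ℝ) + 1)) ^ 2 ≤ 2 := by
  classical
  obtain ⟨N, hN⟩ : ∃ N, ∀ n ∈ s, n < N + 1 := ⟨s.sup id, fun n hn =>
    Nat.lt_succ_of_le (Finset.le_sup (f := id) hn)⟩
  calc ∑ n ∈ s, (1 / ((n : ℝ) + 1)) ^ 2
      ≤ ∑ n ∈ Finset.range (N+1), (1 / ((n : ℝ) + 1)) ^ 2 := by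
        apply Finset.sum_le_sum_of_subset_of_nonneg
        · intro n hn; exact Finset.mem_range.2 (hN n hn)
        · intro n _ _; positivity
    _ ≤ 2 - 1 / ((N : ℝ) + 1) := sum_range_le N
    _ ≤ 2 := by
        have : (0:ℝ) ≤ 1 / ((N:ℝ)+1) := by positivity
        linarith

lemma memxf (p : ENNReal) [Fact (1 ≤ p)] (k : ℕ) : Memℓp (xf k) p := by
  rcases eq_or_ne p ∞ with rfl | hp
  · apply memℓp_infty
    refine ⟨1, ?_⟩
    rintro r ⟨n, rfl⟩
    simp only [Real.norm_eq_abs, abs_of_pos (xf_pos k n)]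
    exact xf_le_one k n
  · have h1p : 1 ≤ p := Fact.out
    have hq1 : 1 ≤ p.toReal := by
      rw [← ENNReal.toReal_one]
      exact ENNReal.toReal_mono hp h1p
    have hq : 0 < p.toReal := by linarith
    have hsum : Summable (fun n : ℕ => (1 / ((n:ℝ) + 1)) ^ 2) := by
      have : Summable (fun n : ℕ => 1 / ((n:ℝ)) ^ 2) := Real.summable_one_div_nat_pow.2 one_lt_two
      have := (summable_nat_add_iff 1).2 this
      apply this.congr
      intro n; push_cast; rw [div_pow]; norm_num
    have hle : ∀ n : ℕ, ‖xf k n‖ ^ p.toReal ≤ (1 / ((n:ℝ) + 1)) ^ 2 := by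
      intro n
      have hb := base_pos n
      have hb1 := base_le_one n
      calc ‖xf k n‖ ^ p.toReal
          = ((1 / ((n : ℝ) + 1)) ^ ((k:ℝ) + 2)) ^ p.toReal := by
            rw [Real.norm_eq_abs, abs_of_pos (xf_pos k n), xf]
            rw [← Real.rpow_natCast (1 / ((n : ℝ) + 1)) (k + 2)]
            push_cast; ring_nf
        _ = (1 / ((n : ℝ) + 1)) ^ (((k:ℝ) + 2) * p.toReal) := by
            rw [← Real.rpow_mul hb.le]
        _ ≤ (1 / ((n : ℝ) + 1)) ^ (2:ℝ) := by
            apply Real.rpow_le_rpow_of_exponent_ge hb hb1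
            nlinarith [Nat.cast_nonneg (α := ℝ) k]
        _ = (1 / ((n : ℝ) + 1)) ^ 2 := by
            rw [← Real.rpow_natCast (1 / ((n : ℝ) + 1)) 2]; norm_num
    exact memℓp_gen (Summable.of_nonneg_of_le (fun n => by positivity) hle hsum)

def xk (p : ENNReal) [Fact (1 ≤ p)] (k : ℕ) : lp (fun _ : ℕ => ℝ) p := ⟨xf k, memxf p k⟩

lemma xk_coe (p : ENNReal) [Fact (1 ≤ p)] (k : ℕ) : (xk p k : ℕ → ℝ) = xf k := rfl

lemma norm_xk_le (p : ENNReal) [Fact (1 ≤ p)] (k : ℕ) : ‖xk p k‖ ≤ 2 := by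
  rcases eq_or_ne p ∞ with rfl | hp
  · apply lp.norm_le_of_forall_le (by norm_num)
    intro n
    rw [xk_coe]
    simp only [Real.norm_eq_abs, abs_of_pos (xf_pos k n)]
    linarith [xf_le_one k n]
  · have h1p : 1 ≤ p := Fact.out
    have hq1 : 1 ≤ p.toReal := by
      rw [← ENNReal.toReal_one]
      exact ENNReal.toReal_mono hp h1p
    have hq : 0 < p.toReal := by linarith
    apply lp.norm_le_of_forall_sum_le hq (by norm_num)
    intro s
    calc ∑ n ∈ s, ‖(xk p k : ℕ → ℝ) n‖ ^ p.toReal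
        ≤ ∑ n ∈ s, (1 / ((n : ℝ) + 1)) ^ 2 := by
          apply Finset.sum_le_sum
          intro n _
          have hb := base_pos n
          have hb1 := base_le_one n
          rw [xk_coe]
          calc ‖xf k n‖ ^ p.toReal
              = ((1 / ((n : ℝ) + 1)) ^ ((k:ℝ) + 2)) ^ p.toReal := by
                rw [Real.norm_eq_abs, abs_of_pos (xf_pos k n), xf]
                rw [← Real.rpow_natCast (1 / ((n : ℝ) + 1)) (k + 2)]
                push_cast; ring_nf
            _ = (1 / ((n : ℝ) + 1)) ^ (((k:ℝ) + 2) * p.toReal) := by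
                rw [← Real.rpow_mul hb.le]
            _ ≤ (1 / ((n : ℝ) + 1)) ^ (2:ℝ) := by
                apply Real.rpow_le_rpow_of_exponent_ge hb hb1
                nlinarith [Nat.cast_nonneg (α := ℝ) k]
            _ = (1 / ((n : ℝ) + 1)) ^ 2 := by
                rw [← Real.rpow_natCast (1 / ((n : ℝ) + 1)) 2]; norm_num
      _ ≤ 2 := sum_sq_le s
      _ ≤ 2 ^ p.toReal := by
          calc (2:ℝ) = 2 ^ (1:ℝ) := by norm_num
          _ ≤ 2 ^ p.toReal := Real.rpow_le_rpow_of_exponent_le one_le_two hq1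


lemma coeFn_sum {p : ENNReal} [Fact (1 ≤ p)] {ι : Type*} (s : Finset ι)
    (v : ι → lp (fun _ : ℕ => ℝ) p) :
    ((∑ i ∈ s, v i : lp (fun _ : ℕ => ℝ) p) : ℕ → ℝ) = ∑ i ∈ s, (v i : ℕ → ℝ) := by
  classical
  induction s using Finset.induction with
  | empty => simp [lp.coeFn_zero]; rfl
  | insert a s h ih => rw [Finset.sum_insert h, Finset.sum_insert h, lp.coeFn_add, ih]

lemma inv_succ_injective : Function.Injective (fun n : ℕ => 1 / ((n : ℝ) + 1)) := by
  intro n m hnm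
  simp only at hnm
  have h1 : ((n:ℝ)+1) ≠ 0 := by positivity
  have h2 : ((m:ℝ)+1) ≠ 0 := by positivity
  rw [div_eq_div_iff h1 h2, one_mul, one_mul] at hnm
  have : m + 1 = n + 1 := by exact_mod_cast hnm
  omega

lemma li (p : ENNReal) [Fact (1 ≤ p)] :
    LinearIndependent ℝ (fun k : ℕ => (V p).mkQ (xk p k)) := by
  classical
  rw [linearIndependent_iff']
  intro s g hg i₀ hi₀
  by_contra hgi
  -- the combination lies in V p
  have hmem : (∑ i ∈ s, g i • xk p i) ∈ V p := by
    rw [← Submodule.Quotient.mk_eq_zero, ← Submodule.mkQ_apply, map_sum]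
    simpa only [map_smul] using hg
  have hcoe : ∀ n : ℕ, ((∑ i ∈ s, g i • xk p i : lp (fun _ : ℕ => ℝ) p) : ℕ → ℝ) n
      = ∑ i ∈ s, g i * xf i n := by
    intro n
    rw [coeFn_sum, Finset.sum_apply]
    apply Finset.sum_congr rfl
    intro i _
    rw [show ((g i • xk p i : lp (fun _ : ℕ => ℝ) p) : ℕ → ℝ) n = g i • (xk p i : ℕ → ℝ) n from
      congrFun (lp.coeFn_smul (g i) (xk p i)) n, xk_coe]
    rfl
  have hS : {n : ℕ | ∑ i ∈ s, g i * xf i n = 0} ∈ hyperfilter ℕ := by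
    have hm2 : {n : ℕ | ((∑ i ∈ s, g i • xk p i : lp (fun _ : ℕ => ℝ) p) : ℕ → ℝ) n = 0}
        ∈ hyperfilter ℕ := hmem
    have hset : {n : ℕ | ∑ i ∈ s, g i * xf i n = 0}
        = {n : ℕ | ((∑ i ∈ s, g i • xk p i : lp (fun _ : ℕ => ℝ) p) : ℕ → ℝ) n = 0} := by
      ext n; simp only [Set.mem_setOf_eq, hcoe n]
    rw [hset]; exact hm2
  -- build the polynomial
  set P : Polynomial ℝ := ∑ i ∈ s, Polynomial.C (g i) * Polynomial.X ^ (i + 2) with hP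
  have hPne : P ≠ 0 := by
    intro h0
    have : P.coeff (i₀ + 2) = g i₀ := by
      rw [hP, Polynomial.finset_sum_coeff]
      rw [Finset.sum_eq_single i₀]
      · simp [Polynomial.coeff_C_mul, Polynomial.coeff_X_pow]
      · intro i hi hne
        simp only [Polynomial.coeff_C_mul, Polynomial.coeff_X_pow]
        rw [if_neg (by omega)]
        simp
      · intro h; exact absurd hi₀ h
    rw [h0] at this
    simp at this
    exact hgi this.symm
  have hfin : {n : ℕ | ∑ i ∈ s, g i * xf i n = 0}.Finite := by
    apply Set.Finite.subset
      (Set.Finite.preimage (inv_succ_injective.injOn) (Polynomial.finite_setOf_isRoot hPne))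
    intro n hn
    simp only [Set.mem_setOf_eq] at hn
    simp only [Set.mem_preimage, Set.mem_setOf_eq, Polynomial.IsRoot, hP,
      Polynomial.eval_finset_sum, Polynomial.eval_mul, Polynomial.eval_C, Polynomial.eval_pow,
      Polynomial.eval_X]
    exact hn
  exact Filter.notMem_hyperfilter_of_finite hfin hS

end Stmt8

end Stmt8Aux

theorem stmt_8 (p : ENNReal) [Fact (1 ≤ p)] :
    ∃ h : lp (fun _ : ℕ => ℝ) p →ₗ[ℝ] ℝ,
      ¬Continuous h ∧
      ∀ (I : Type) (a : I → lp (fun _ : ℕ => ℝ) p),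
        (∀ i j : I, i ≠ j →
          {n : ℕ | (a i : ℕ → ℝ) n ≠ 0} ∩ {n : ℕ | (a j : ℕ → ℝ) n ≠ 0} = ∅) →
        ∀ i j : I, h (a i) ≠ 0 → h (a j) ≠ 0 → i = j := by
  classical
  set y : ℕ → (lp (fun _ : ℕ => ℝ) p ⧸ Stmt8.V p) :=
    fun k => (Stmt8.V p).mkQ (Stmt8.xk p k) with hy
  have li : LinearIndependent ℝ y := Stmt8.li p
  have liR := (linearIndepOn_id_range_iff li.injective).mpr li
  set b := Module.Basis.extend liR with hb
  set g0 : (lp (fun _ : ℕ => ℝ) p ⧸ Stmt8.V p) →ₗ[ℝ] ℝ :=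
    b.constr ℝ (fun v => ((Function.invFun y (v : lp (fun _ : ℕ => ℝ) p ⧸ Stmt8.V p) : ℕ) : ℝ))
    with hg0
  have hk : ∀ k : ℕ, g0 (y k) = k := by
    intro k
    have hmem : y k ∈ liR.extend (Set.subset_univ _) := liR.subset_extend _ ⟨k, rfl⟩
    have hyb : y k = b ⟨y k, hmem⟩ := (Module.Basis.extend_apply_self liR ⟨y k, hmem⟩).symm
    rw [hyb, hg0, Module.Basis.constr_basis]
    simp only
    rw [Function.leftInverse_invFun li.injective k]
  refine ⟨g0.comp (Stmt8.V p).mkQ, ?_, ?_⟩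
  · -- not continuous
    intro hc
    set H : lp (fun _ : ℕ => ℝ) p →L[ℝ] ℝ := ⟨g0.comp (Stmt8.V p).mkQ, hc⟩ with hH
    set k : ℕ := ⌈2 * ‖H‖⌉₊ + 1 with hkdef
    have hHk : H (Stmt8.xk p k) = k := by
      show g0 ((Stmt8.V p).mkQ (Stmt8.xk p k)) = k
      exact hk k
    have hle := H.le_opNorm (Stmt8.xk p k)
    rw [hHk] at hle
    have h1 : ‖(k : ℝ)‖ = (k : ℝ) := by
      rw [Real.norm_eq_abs, abs_of_nonneg (by positivity)]
    rw [h1] at hle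
    have h2 : ‖H‖ * ‖Stmt8.xk p k‖ ≤ ‖H‖ * 2 :=
      mul_le_mul_of_nonneg_left (Stmt8.norm_xk_le p k) (norm_nonneg H)
    have h3 : (k : ℝ) ≤ 2 * ‖H‖ := by linarith
    have h4 : 2 * ‖H‖ ≤ (⌈2 * ‖H‖⌉₊ : ℝ) := Nat.le_ceil _
    have h5 : ((⌈2 * ‖H‖⌉₊ : ℕ) : ℝ) < (k : ℝ) := by
      rw [hkdef]; push_cast; linarith
    linarith
  · -- disjoint supports
    intro I a hdisj i j hi hj
    by_contra hij
    have hzero : ∀ x : lp (fun _ : ℕ => ℝ) p, x ∈ Stmt8.V p →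
        (g0.comp (Stmt8.V p).mkQ) x = 0 := by
      intro x hx
      have : (Stmt8.V p).mkQ x = 0 := by
        rw [Submodule.mkQ_apply, Submodule.Quotient.mk_eq_zero]
        exact hx
      rw [LinearMap.comp_apply, this, map_zero]
    have hunion : ({n : ℕ | (a i : ℕ → ℝ) n = 0} ∪ {n : ℕ | (a j : ℕ → ℝ) n = 0})
        ∈ hyperfilter ℕ := by
      have he := hdisj i j hij
      have : ({n : ℕ | (a i : ℕ → ℝ) n = 0} ∪ {n : ℕ | (a j : ℕ → ℝ) n = 0}) = Set.univ := by
        ext n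
        simp only [Set.mem_union, Set.mem_setOf_eq, Set.mem_univ, iff_true]
        by_contra hcon
        push_neg at hcon
        have : n ∈ ({n : ℕ | (a i : ℕ → ℝ) n ≠ 0} ∩ {n : ℕ | (a j : ℕ → ℝ) n ≠ 0}) :=
          ⟨hcon.1, hcon.2⟩
        rw [he] at this
        exact this
      rw [this]
      exact Filter.univ_mem
    rcases (Ultrafilter.union_mem_iff).1 hunion with hm | hm
    · exact hi (hzero (a i) hm)
    · exact hj (hzero (a j) hm)
end

section
/- For 1 ≤ p ≤ ∞ there exists a proper linear subspace V of l_p(ℕ) of codimension at least 2 (indeed infinite) such that for any two elements a, b of l_p(ℕ) with disjoint supports, a ∈ V or b ∈ V. -/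
open Filter Polynomial

noncomputable section

private def stmt16f (i : ℕ) : ℕ → ℝ := fun n => (n : ℝ) ^ i * (1/2 : ℝ) ^ n

private lemma stmt16f_mem (p : ENNReal) [Fact (1 ≤ p)] (i : ℕ) :
    Memℓp (stmt16f i) p := by
  have h1 : Memℓp (stmt16f i) 1 := by
    apply memℓp_gen
    have hs : Summable (fun n : ℕ => (n : ℝ) ^ i * (1/2 : ℝ) ^ n) :=
      summable_pow_mul_geometric_of_norm_lt_one i (by norm_num)
    refine hs.congr fun n => ?_
    simp only [ENNReal.toReal_one, Real.rpow_one, stmt16f]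
    rw [Real.norm_of_nonneg (by positivity)]
  exact h1.of_exponent_ge Fact.out

theorem stmt_16 (p : ENNReal) [Fact (1 ≤ p)] :
    ∃ W : Submodule ℝ (lp (fun _ : ℕ => ℝ) p),
      W ≠ ⊤ ∧
      2 ≤ Module.rank ℝ (lp (fun _ : ℕ => ℝ) p ⧸ W) ∧
      Cardinal.aleph0 ≤ Module.rank ℝ (lp (fun _ : ℕ => ℝ) p ⧸ W) ∧
      ∀ a b : lp (fun _ : ℕ => ℝ) p,
        (∀ n : ℕ, (a : ℕ → ℝ) n = 0 ∨ (b : ℕ → ℝ) n = 0) →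
        a ∈ W ∨ b ∈ W := by
  classical
  set U : Ultrafilter ℕ := Filter.hyperfilter ℕ with hUdef
  set W : Submodule ℝ (lp (fun _ : ℕ => ℝ) p) :=
    { carrier := {x | ∀ᶠ n in (U : Filter ℕ), (x : ℕ → ℝ) n = 0}
      add_mem' := by
        intro a b ha hb
        filter_upwards [ha, hb] with n h1 h2
        simp [lp.coeFn_add, h1, h2]
      zero_mem' := by
        filter_upwards with n
        simp [lp.coeFn_zero]
      smul_mem' := by
        intro c x hx
        filter_upwards [hx] with n h
        simp [lp.coeFn_smul, h] } with hWdef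
  -- the family
  set F : ℕ → lp (fun _ : ℕ => ℝ) p := fun i => ⟨stmt16f i, stmt16f_mem p i⟩ with hFdef
  have hFcoe : ∀ i, (F i : ℕ → ℝ) = stmt16f i := fun i => rfl
  -- key: linear independence of the images in the quotient
  have hind : LinearIndependent ℝ (fun i => W.mkQ (F i)) := by
    rw [linearIndependent_iff']
    intro s g hsum j hj
    by_contra hgj
    have hmem : (∑ i ∈ s, g i • F i) ∈ W := by
      have : W.mkQ (∑ i ∈ s, g i • F i) = 0 := by
        rw [map_sum]
        simpa using hsum
      rwa [Submodule.mkQ_apply, Submodule.Quotient.mk_eq_zero] at this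
    -- compute coordinates
    have hcoord : ∀ n : ℕ, ((∑ i ∈ s, g i • F i : lp (fun _ : ℕ => ℝ) p) : ℕ → ℝ) n
        = (∑ i ∈ s, g i * (n : ℝ) ^ i) * (1/2 : ℝ) ^ n := by
      intro n
      rw [lp.coeFn_sum, Finset.sum_apply, Finset.sum_mul]
      refine Finset.sum_congr rfl fun i _ => ?_
      rw [lp.coeFn_smul, Pi.smul_apply, hFcoe]
      simp [stmt16f, mul_assoc]
    -- the polynomial
    set P : ℝ[X] := ∑ i ∈ s, Polynomial.C (g i) * Polynomial.X ^ i with hPdef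
    have hPne : P ≠ 0 := by
      intro h0
      apply hgj
      have : P.coeff j = g j := by
        rw [hPdef, Polynomial.finset_sum_coeff]
        rw [Finset.sum_eq_single j]
        · simp
        · intro i hi hij
          simp [Polynomial.coeff_C_mul, Polynomial.coeff_X_pow, Ne.symm hij]
        · intro h; exact absurd hj h
      rw [h0] at this
      simpa using this.symm
    -- root set finite
    have hroots : {x : ℝ | P.IsRoot x}.Finite := Polynomial.finite_setOf_isRoot hPne
    have hfin : {n : ℕ | ((∑ i ∈ s, g i • F i : lp (fun _ : ℕ => ℝ) p) : ℕ → ℝ) n = 0}.Finite := by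
      apply Set.Finite.subset (hroots.preimage (f := fun n : ℕ => (n : ℝ))
        (Set.injOn_of_injective Nat.cast_injective))
      intro n hn
      simp only [Set.mem_setOf_eq, hcoord n] at hn
      have h2 : (∑ i ∈ s, g i * (n : ℝ) ^ i) = 0 := by
        rcases mul_eq_zero.mp hn with h | h
        · exact h
        · exact absurd h (by positivity)
      show P.IsRoot (n : ℝ)
      simp [Polynomial.IsRoot, hPdef, Polynomial.eval_finset_sum, h2]
    have : {n : ℕ | ((∑ i ∈ s, g i • F i : lp (fun _ : ℕ => ℝ) p) : ℕ → ℝ) n = 0} ∈ U :=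
      hmem
    exact hfin.notMem_hyperfilter this
  refine ⟨W, ?_, ?_, ?_, ?_⟩
  · -- W ≠ ⊤ : F 0 is never zero
    intro htop
    have : F 0 ∈ W := htop ▸ Submodule.mem_top
    have h2 : ∀ᶠ n in (U : Filter ℕ), (F 0 : ℕ → ℝ) n = 0 := this
    rcases h2.exists with ⟨n, hn⟩
    rw [hFcoe] at hn
    simp only [stmt16f, pow_zero, one_mul] at hn
    exact absurd hn (by positivity)
  · exact le_trans (by simpa using (Cardinal.nat_lt_aleph0 2).le) hind.aleph0_le_rank
  · exact hind.aleph0_le_rank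
  · intro a b hab
    have : {n | (a : ℕ → ℝ) n = 0} ∪ {n | (b : ℕ → ℝ) n = 0} ∈ U := by
      rw [show {n | (a : ℕ → ℝ) n = 0} ∪ {n | (b : ℕ → ℝ) n = 0} = Set.univ from
        Set.eq_univ_of_forall fun n => hab n]
      exact Filter.univ_mem
    rcases Ultrafilter.union_mem_iff.mp this with h | h
    · exact Or.inl h
    · exact Or.inr h

end
end

section
/- There exists a linear functional h on l_p(ℕ), 1 ≤ p < ∞, such that h is discontinuous, yet for every sequence (a_k) of pairwise disjointly supported elements of l_p(ℕ), the sequence (h(a_k)) has at most one nonzero term. -/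
open Filter

noncomputable def Vsub (p : ENNReal) [Fact (1 ≤ p)] :
    Submodule ℝ (lp (fun _ : ℕ => ℝ) p) where
  carrier := {x | {n | (x : ℕ → ℝ) n ≠ 0} ∉ (hyperfilter ℕ : Ultrafilter ℕ)}
  zero_mem' := by
    simp only [Set.mem_setOf_eq]
    convert (Set.toFinite (∅ : Set ℕ)).notMem_hyperfilter
    ext n
    simp only [Set.mem_setOf_eq, Set.mem_empty_iff_false, iff_false, not_not]
    exact congrFun (lp.coeFn_zero _ _) n
  add_mem' := by
    intro a b ha hb
    simp only [Set.mem_setOf_eq] at *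
    intro hmem
    have hsub : {n | ((a + b : lp (fun _ : ℕ => ℝ) p) : ℕ → ℝ) n ≠ 0} ⊆
        {n | (a : ℕ → ℝ) n ≠ 0} ∪ {n | (b : ℕ → ℝ) n ≠ 0} := by
      intro n hn
      by_contra hc
      simp only [Set.mem_union, Set.mem_setOf_eq, not_or, not_not] at hc
      apply hn
      have := lp.coeFn_add a b
      have h2 : ((a + b : lp (fun _ : ℕ => ℝ) p) : ℕ → ℝ) n = (a : ℕ → ℝ) n + (b : ℕ → ℝ) n := by
        rw [this]; rfl
      rw [h2, hc.1, hc.2, add_zero]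
    have : {n | (a : ℕ → ℝ) n ≠ 0} ∪ {n | (b : ℕ → ℝ) n ≠ 0} ∈ (hyperfilter ℕ : Ultrafilter ℕ) :=
      mem_of_superset hmem hsub
    rcases Ultrafilter.union_mem_iff.mp this with h | h
    · exact ha h
    · exact hb h
  smul_mem' := by
    intro c a ha
    simp only [Set.mem_setOf_eq] at *
    intro hmem
    apply ha
    refine mem_of_superset hmem ?_
    intro n hn
    simp only [Set.mem_setOf_eq] at *
    intro h0
    apply hn
    have := lp.coeFn_smul c a
    have h2 : ((c • a : lp (fun _ : ℕ => ℝ) p) : ℕ → ℝ) n = c * (a : ℕ → ℝ) n := by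
      rw [this]; rfl
    rw [h2, h0, mul_zero]

theorem stmt_19 (p : ENNReal) [Fact (1 ≤ p)] (hp : p ≠ ⊤) :
    ∃ h : lp (fun _ : ℕ => ℝ) p →ₗ[ℝ] ℝ,
      ¬Continuous h ∧
      ∀ a : ℕ → lp (fun _ : ℕ => ℝ) p,
        (∀ k m : ℕ, k ≠ m →
          {n : ℕ | (a k : ℕ → ℝ) n ≠ 0} ∩ {n : ℕ | (a m : ℕ → ℝ) n ≠ 0} = ∅) →
        ∀ k m : ℕ, h (a k) ≠ 0 → h (a m) ≠ 0 → k = m := by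
  classical
  have hp1 : (1 : ENNReal) ≤ p := Fact.out
  have hpt : 0 < p.toReal := by
    have : (0:ENNReal) < p := lt_of_lt_of_le (by norm_num) hp1
    exact ENNReal.toReal_pos this.ne' hp
  -- the element with full support
  have hx0mem : Memℓp (fun n : ℕ => ((2:ℝ)⁻¹) ^ n) p := by
    apply memℓp_gen
    have : ∀ n : ℕ, ‖((2:ℝ)⁻¹) ^ n‖ ^ p.toReal = (((2:ℝ)⁻¹) ^ p.toReal) ^ n := by
      intro n
      rw [norm_pow, Real.norm_eq_abs, abs_of_pos (by norm_num : (0:ℝ) < 2⁻¹)]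
      rw [← Real.rpow_natCast (2:ℝ)⁻¹ n, ← Real.rpow_mul (by norm_num), mul_comm,
        Real.rpow_mul (by positivity), Real.rpow_natCast]
    simp only [this]
    apply summable_geometric_of_lt_one (by positivity)
    exact Real.rpow_lt_one (by norm_num) (by norm_num) hpt
  set x₀ : lp (fun _ : ℕ => ℝ) p := ⟨fun n => ((2:ℝ)⁻¹) ^ n, hx0mem⟩ with hx₀
  have hx₀notV : x₀ ∉ Vsub p := by
    simp only [Vsub, Submodule.mem_mk, AddSubmonoid.mem_mk, AddSubsemigroup.mem_mk,
      Set.mem_setOf_eq, not_not]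
    have : {n : ℕ | (x₀ : ℕ → ℝ) n ≠ 0} = Set.univ := by
      ext n; simp only [Set.mem_setOf_eq, Set.mem_univ, iff_true]
      show ((2:ℝ)⁻¹) ^ n ≠ 0
      positivity
    rw [this]
    exact univ_mem
  -- quotient and a functional
  set Q := lp (fun _ : ℕ => ℝ) p ⧸ Vsub p
  have hq0 : Submodule.Quotient.mk (p := Vsub p) x₀ ≠ 0 := by
    simpa [Submodule.Quotient.mk_eq_zero] using hx₀notV
  obtain ⟨f, hfx₀, hfV⟩ := (Vsub p).exists_dual_map_eq_bot_of_notMem hx₀notV inferInstance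
  have hfV' : ∀ v ∈ Vsub p, f v = 0 := by
    intro v hv
    have : f v ∈ (Vsub p).map f := Submodule.mem_map_of_mem hv
    rwa [hfV, Submodule.mem_bot] at this
  have hsingle : ∀ (i : ℕ) (c : ℝ), lp.single p i c ∈ Vsub p := by
    intro i c
    show {n | (lp.single p i c : ℕ → ℝ) n ≠ 0} ∉ (hyperfilter ℕ : Ultrafilter ℕ)
    have hsub : {n | (lp.single p i c : ℕ → ℝ) n ≠ 0} ⊆ {i} := by
      intro n hn
      simp only [Set.mem_setOf_eq] at hn
      by_contra hne
      have hni : n ≠ i := by simpa using hne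
      exact hn (by rw [lp.single_apply, Pi.single_eq_of_ne hni])
    intro hmem
    exact ((Set.finite_singleton i).subset hsub).notMem_hyperfilter
      (mem_of_superset hmem (by intro z hz; exact hz))
  refine ⟨f, ?_, ?_⟩
  · intro hcont
    have hker : IsClosed (LinearMap.ker f : Set (lp (fun _ : ℕ => ℝ) p)) :=
      isClosed_eq hcont continuous_const
    have hx₀closure : x₀ ∈ closure ((Vsub p : Set (lp (fun _ : ℕ => ℝ) p))) := by
      have hsum := lp.hasSum_single hp x₀
      have : Tendsto (fun s : Finset ℕ => ∑ i ∈ s, lp.single p i ((x₀ : ℕ → ℝ) i))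
          atTop (nhds x₀) := hsum
      refine mem_closure_of_tendsto this ?_
      filter_upwards with s
      exact Submodule.sum_mem _ fun i _ => hsingle i _
    have hVker : (Vsub p : Set (lp (fun _ : ℕ => ℝ) p)) ⊆ (LinearMap.ker f : Set _) := by
      intro v hv; exact hfV' v hv
    have : x₀ ∈ (LinearMap.ker f : Set _) := (hker.closure_subset_iff.mpr hVker) hx₀closure
    exact hfx₀ this
  · intro a hdisj k m hk hm
    by_contra hne
    have hak : a k ∉ Vsub p := fun hmem => hk (hfV' _ hmem)
    have ham : a m ∉ Vsub p := fun hmem => hm (hfV' _ hmem)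
    have key : ∀ j : ℕ, f (a j) ≠ 0 →
        {n | (a j : ℕ → ℝ) n ≠ 0} ∈ (hyperfilter ℕ : Ultrafilter ℕ) := by
      intro j hj
      by_contra hc
      exact (fun hmem => hj (hfV' _ hmem)) hc
    have hinter := inter_mem (key k hk) (key m hm)
    rw [hdisj k m hne] at hinter
    exact (Filter.empty_notMem _) hinter
end
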